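/- Let B be a Hermitian (k+n₋)×(k+n₋) PSD matrix of rank k whose p×p principal minors are strictly positive for 1 ≤ p ≤ k, and let P be the orthogonal projection onto ker B. Then for all sufficiently small ε > 0, the matrix B − εP is k-PMP, has signature (k, 0, n₋), and every (k+1)×(k+1) principal minor of B − εP is negative. -/

import Mathlib

open Matrix
open scoped ComplexOrder

/-- A Hermitian matrix is `k`-PMP if all its principal minors of size at most `k`
are non-negative. -/
def kPMP {N : ℕ} (k : ℕ) (A : Matrix (Fin N) (Fin N) ℂ) : Prop :=
  ∀ S : Finset (Fin N), S.card ≤ k →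
    0 ≤ (A.submatrix (fun i : S => (i : Fin N)) (fun i : S => (i : Fin N))).det

namespace Stmt11Aux

open Finset

variable {m n : Type*} [Fintype m] [Fintype n] [DecidableEq m] [DecidableEq n]

noncomputable def extMap (f : m → n) : (m → ℂ) →ₗ[ℂ] (n → ℂ) where
  toFun v := fun j => ∑ i, if f i = j then v i else 0
  map_add' u v := by
    funext j
    rw [Pi.add_apply, ← Finset.sum_add_distrib]
    exact Finset.sum_congr rfl fun i _ => by split_ifs <;> simp
  map_smul' c v := by
    funext j
    simp only [RingHom.id_apply, Pi.smul_apply, smul_eq_mul, Finset.mul_sum]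
    exact Finset.sum_congr rfl fun i _ => by split_ifs <;> simp

lemma extMap_apply_mem (f : m → n) (hf : Function.Injective f) (v : m → ℂ) (i : m) :
    extMap f v (f i) = v i := by
  simp [extMap, hf.eq_iff]

lemma extMap_apply_not (f : m → n) (v : m → ℂ) (j : n) (hj : ∀ i, f i ≠ j) :
    extMap f v j = 0 :=
  Finset.sum_eq_zero fun i _ => if_neg (hj i)

lemma extMap_injective (f : m → n) (hf : Function.Injective f) :
    Function.Injective (extMap f) := fun u v h => by
  funext i
  have := congrFun h (f i)
  rwa [extMap_apply_mem f hf, extMap_apply_mem f hf] at this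

lemma extMap_dotProduct (f : m → n) (hf : Function.Injective f) (v : m → ℂ) (w : n → ℂ) :
    extMap f v ⬝ᵥ w = ∑ i, v i * w (f i) := by
  simp only [dotProduct, extMap, LinearMap.coe_mk, AddHom.coe_mk]
  have : ∀ j, (∑ i, if f i = j then v i else 0) * w j
      = ∑ i, if f i = j then v i * w j else 0 := by
    intro j
    rw [Finset.sum_mul]
    exact Finset.sum_congr rfl fun i _ => by split_ifs <;> simp
  rw [Finset.sum_congr rfl fun j _ => this j, Finset.sum_comm]
  refine Finset.sum_congr rfl fun i _ => ?_
  rw [Finset.sum_ite_eq]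
  simp

lemma star_extMap (f : m → n) (v : m → ℂ) : star (extMap f v) = extMap f (star v) := by
  funext j
  simp only [Pi.star_apply, extMap, LinearMap.coe_mk, AddHom.coe_mk, star_sum]
  exact Finset.sum_congr rfl fun i _ => by split_ifs <;> simp

lemma extMap_quadratic (f : m → n) (hf : Function.Injective f) (A : Matrix n n ℂ) (x : m → ℂ) :
    star (extMap f x) ⬝ᵥ A *ᵥ extMap f x = star x ⬝ᵥ (A.submatrix f f) *ᵥ x := by
  rw [star_extMap, extMap_dotProduct f hf]
  refine Finset.sum_congr rfl fun i _ => ?_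
  congr 1
  have h1 : (A *ᵥ extMap f x) (f i) = extMap f x ⬝ᵥ (fun j => A (f i) j) := by
    simp [mulVec, dotProduct, mul_comm]
  rw [h1, extMap_dotProduct f hf]
  simp [mulVec, dotProduct, submatrix_apply, mul_comm]

lemma finrank_range_extMap (f : m → n) (hf : Function.Injective f) :
    Module.finrank ℂ (LinearMap.range (extMap f)) = Fintype.card m := by
  rw [LinearMap.finrank_range_of_inj (extMap_injective f hf),
    Module.finrank_fintype_fun_eq_card]

lemma star_dotProduct_self' (v : n → ℂ) :
    star v ⬝ᵥ v = ((∑ i, Complex.normSq (v i) : ℝ) : ℂ) := by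
  simp only [dotProduct, Pi.star_apply, Complex.ofReal_sum]
  exact Finset.sum_congr rfl fun i _ => by
    rw [Complex.normSq_eq_conj_mul_self]; rfl

lemma sum_normSq_pos {v : n → ℂ} (hv : v ≠ 0) : 0 < ∑ i, Complex.normSq (v i) := by
  obtain ⟨i, hi⟩ := Function.ne_iff.mp hv
  exact Finset.sum_pos' (fun j _ => Complex.normSq_nonneg _)
    ⟨i, Finset.mem_univ i, Complex.normSq_pos.mpr hi⟩

lemma herm_form {A : Matrix n n ℂ} (hA : A.IsHermitian) (v : n → ℂ) :
    star v ⬝ᵥ A *ᵥ v =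
      ((∑ i, hA.eigenvalues i *
        Complex.normSq ((star (hA.eigenvectorUnitary : Matrix n n ℂ) *ᵥ v) i) : ℝ) : ℂ) := by
  set U : Matrix n n ℂ := (hA.eigenvectorUnitary : Matrix n n ℂ) with hU
  set u : n → ℂ := star U *ᵥ v with hu
  have hsu : star v ᵥ* U = star u := by
    rw [hu, star_mulVec, star_eq_conjTranspose, conjTranspose_conjTranspose]
  conv_lhs => rw [hA.spectral_theorem, Unitary.conjStarAlgAut_apply]
  rw [← mulVec_mulVec, ← mulVec_mulVec, dotProduct_mulVec, hsu]
  simp only [dotProduct, mulVec_diagonal, Complex.ofReal_sum, Pi.star_apply,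
    Function.comp_apply]
  refine Finset.sum_congr rfl fun i _ => ?_
  have : (RCLike.ofReal (hA.eigenvalues i) : ℂ) = ((hA.eigenvalues i : ℝ) : ℂ) := rfl
  rw [this, Complex.ofReal_mul, Complex.normSq_eq_conj_mul_self]
  show star (u i) * (_ * u i) = _
  rw [Complex.star_def]
  ring

lemma sum_normSq_star_unitary {A : Matrix n n ℂ} (hA : A.IsHermitian) (v : n → ℂ) :
    ∑ i, Complex.normSq ((star (hA.eigenvectorUnitary : Matrix n n ℂ) *ᵥ v) i)
      = ∑ i, Complex.normSq (v i) := by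
  set U : Matrix n n ℂ := (hA.eigenvectorUnitary : Matrix n n ℂ) with hU
  set u : n → ℂ := star U *ᵥ v with hu
  have hsu : star v ᵥ* U = star u := by
    rw [hu, star_mulVec, star_eq_conjTranspose, conjTranspose_conjTranspose]
  have hUunit : U * star U = 1 := mem_unitaryGroup_iff.mp hA.eigenvectorUnitary.2
  have h1 : star u ⬝ᵥ u = star v ⬝ᵥ v := by
    rw [← hsu, ← dotProduct_mulVec, hu, mulVec_mulVec, hUunit, one_mulVec]
  rw [star_dotProduct_self', star_dotProduct_self'] at h1
  exact_mod_cast h1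

lemma count_le {A : Matrix n n ℂ} (hA : A.IsHermitian) (σ : ℝ) (Pr : n → Prop)
    [DecidablePred Pr]
    (hsign : ∀ i, ¬ Pr i → σ * hA.eigenvalues i ≤ 0)
    (W : Submodule ℂ (n → ℂ))
    (hW : ∀ v ∈ W, v ≠ 0 → 0 < σ * (star v ⬝ᵥ A *ᵥ v).re) :
    Module.finrank ℂ W ≤ (Finset.univ.filter fun i => Pr i).card := by
  classical
  by_contra hlt
  push_neg at hlt
  set U : Matrix n n ℂ := (hA.eigenvectorUnitary : Matrix n n ℂ) with hUdef
  have hUunit : U * star U = 1 := mem_unitaryGroup_iff.mp hA.eigenvectorUnitary.2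
  have hUunit' : star U * U = 1 := mem_unitaryGroup_iff'.mp hA.eigenvectorUnitary.2
  let e : (n → ℂ) ≃ₗ[ℂ] (n → ℂ) :=
    LinearEquiv.ofLinear (mulVecLin (star U)) (mulVecLin U)
      (by rw [← mulVecLin_mul, hUunit', mulVecLin_one])
      (by rw [← mulVecLin_mul, hUunit, mulVecLin_one])
  let V : Submodule ℂ (n → ℂ) :=
    Submodule.comap (e : (n → ℂ) →ₗ[ℂ] (n → ℂ))
      (LinearMap.range (extMap (Subtype.val : {i // ¬ Pr i} → n)))
  have hVrank : Module.finrank ℂ V = (Finset.univ.filter fun i => ¬ Pr i).card := by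
    rw [show V = Submodule.comap (e : (n → ℂ) →ₗ[ℂ] (n → ℂ)) _ from rfl,
      Submodule.comap_equiv_eq_map_symm, LinearEquiv.finrank_map_eq,
      finrank_range_extMap _ Subtype.val_injective, Fintype.card_subtype]
  have hsum : Module.finrank ℂ (W ⊔ V : Submodule ℂ (n → ℂ))
        + Module.finrank ℂ (W ⊓ V : Submodule ℂ (n → ℂ))
      = Module.finrank ℂ W + Module.finrank ℂ V :=
    Submodule.finrank_sup_add_finrank_inf_eq W V
  have htop : Module.finrank ℂ (W ⊔ V : Submodule ℂ (n → ℂ)) ≤ Fintype.card n := by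
    simpa [Module.finrank_fintype_fun_eq_card] using (W ⊔ V).finrank_le
  have hcards : (Finset.univ.filter fun i => Pr i).card
      + (Finset.univ.filter fun i => ¬ Pr i).card = Fintype.card n := by
    simpa using Finset.card_filter_add_card_filter_not (s := univ) Pr
  have hpos : 0 < Module.finrank ℂ (W ⊓ V : Submodule ℂ (n → ℂ)) := by omega
  have hne : (W ⊓ V : Submodule ℂ (n → ℂ)) ≠ ⊥ := by
    intro h
    rw [h, finrank_bot] at hpos
    exact lt_irrefl 0 hpos
  obtain ⟨v, hv, hv0⟩ := (Submodule.ne_bot_iff _).mp hne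
  obtain ⟨y, hy⟩ := hv.2
  have hu0 : ∀ i, Pr i → (star U *ᵥ v) i = 0 := by
    intro i hi
    have : extMap (Subtype.val : {i // ¬ Pr i} → n) y = star U *ᵥ v := hy
    rw [← this]
    exact extMap_apply_not _ _ _ (fun j hji => j.2 (hji ▸ hi))
  have hle : σ * (star v ⬝ᵥ A *ᵥ v).re ≤ 0 := by
    rw [herm_form hA v, Complex.ofReal_re, Finset.mul_sum]
    refine Finset.sum_nonpos fun i _ => ?_
    by_cases hi : Pr i
    · rw [hu0 i hi]
      simp
    · have h1 := hsign i hi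
      have h2 : 0 ≤ Complex.normSq ((star U *ᵥ v) i) := Complex.normSq_nonneg _
      nlinarith
  exact absurd (hW v hv.1 hv0) (not_lt.mpr hle)

lemma form_ge_inf {A : Matrix n n ℂ} (hA : A.IsHermitian) [Nonempty n] (x : n → ℂ) :
    (Finset.univ.inf' Finset.univ_nonempty hA.eigenvalues) * (∑ i, Complex.normSq (x i))
      ≤ (star x ⬝ᵥ A *ᵥ x).re := by
  rw [herm_form hA x, Complex.ofReal_re, ← sum_normSq_star_unitary hA x, Finset.mul_sum]
  refine Finset.sum_le_sum fun i _ => ?_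
  exact mul_le_mul_of_nonneg_right (Finset.inf'_le _ (Finset.mem_univ i))
    (Complex.normSq_nonneg _)

lemma proj_form_nonneg {Q : Matrix n n ℂ} (hQ : Qᴴ = Q) (hQ2 : Q * Q = Q) (v : n → ℂ) :
    0 ≤ (star v ⬝ᵥ Q *ᵥ v).re := by
  have h1 : star v ᵥ* Q = star (Q *ᵥ v) := by rw [star_mulVec, hQ]
  have h2 : star v ⬝ᵥ Q *ᵥ v = star (Q *ᵥ v) ⬝ᵥ (Q *ᵥ v) := by
    calc star v ⬝ᵥ Q *ᵥ v = star v ⬝ᵥ (Q * Q) *ᵥ v := by rw [hQ2]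
      _ = star v ⬝ᵥ Q *ᵥ (Q *ᵥ v) := by rw [mulVec_mulVec]
      _ = (star v ᵥ* Q) ⬝ᵥ (Q *ᵥ v) := dotProduct_mulVec _ _ _
      _ = star (Q *ᵥ v) ⬝ᵥ (Q *ᵥ v) := by rw [h1]
  rw [h2, star_dotProduct_self', Complex.ofReal_re]
  exact Finset.sum_nonneg fun i _ => Complex.normSq_nonneg _

lemma proj_form_le {Q : Matrix n n ℂ} (hQ : Qᴴ = Q) (hQ2 : Q * Q = Q) (v : n → ℂ) :
    (star v ⬝ᵥ Q *ᵥ v).re ≤ ∑ i, Complex.normSq (v i) := by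
  have h1 : ((1 : Matrix n n ℂ) - Q)ᴴ = 1 - Q := by
    rw [conjTranspose_sub, conjTranspose_one, hQ]
  have h2 : ((1 : Matrix n n ℂ) - Q) * (1 - Q) = 1 - Q := by
    rw [sub_mul, one_mul, mul_sub, mul_one, hQ2]
    abel
  have h3 := proj_form_nonneg h1 h2 v
  rw [sub_mulVec, dotProduct_sub, one_mulVec, Complex.sub_re, star_dotProduct_self',
    Complex.ofReal_re] at h3
  linarith

lemma extMap_sum_normSq (f : m → n) (hf : Function.Injective f) (x : m → ℂ) :
    ∑ j, Complex.normSq (extMap f x j) = ∑ i, Complex.normSq (x i) := by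
  have h := extMap_quadratic f hf 1 x
  rw [one_mulVec, Matrix.submatrix_one f hf, one_mulVec,
    star_dotProduct_self', star_dotProduct_self'] at h
  exact_mod_cast h

end Stmt11Aux

open Stmt11Aux Finset

set_option maxHeartbeats 1000000 in
/-- Let `B` be a Hermitian PSD `(k + n₋) × (k + n₋)` matrix of rank `k` whose
principal minors of size at most `k` are strictly positive, and let `P` be the
orthogonal projection onto `ker B` (a Hermitian idempotent whose fixed vectors
are exactly the kernel of `B`). Then for all sufficiently small `ε > 0`, the
matrix `B − ε P` is `k`-PMP, has signature `(k, 0, n₋)`, and all of its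
`(k+1) × (k+1)` principal minors are negative. -/
theorem stmt11 {k nm : ℕ} (B P : Matrix (Fin (k + nm)) (Fin (k + nm)) ℂ)
    (hB : B.PosSemidef) (hrank : B.rank = k)
    (hminors : ∀ S : Finset (Fin (k + nm)), S.Nonempty → S.card ≤ k →
      0 < (B.submatrix (fun i : S => (i : Fin (k + nm)))
            (fun i : S => (i : Fin (k + nm)))).det)
    (hP : P.IsHermitian) (hP2 : P * P = P)
    (hPker : ∀ v : Fin (k + nm) → ℂ, B.mulVec v = 0 ↔ P.mulVec v = v) :
    ∃ ε₀ : ℝ, 0 < ε₀ ∧ ∀ ε : ℝ, 0 < ε → ε < ε₀ →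
      kPMP k (B - (ε : ℂ) • P) ∧
      (∃ hM : (B - (ε : ℂ) • P).IsHermitian,
        (Finset.univ.filter fun i => 0 < hM.eigenvalues i).card = k ∧
        (Finset.univ.filter fun i => hM.eigenvalues i = 0).card = 0 ∧
        (Finset.univ.filter fun i => hM.eigenvalues i < 0).card = nm) ∧
      ∀ S : Finset (Fin (k + nm)), S.card = k + 1 →
        ((B - (ε : ℂ) • P).submatrix (fun i : S => (i : Fin (k + nm)))
          (fun i : S => (i : Fin (k + nm)))).det < 0 := by
  classical
  -- basic algebraic facts
  have hBP : B * P = 0 := by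
    have h : ∀ w, (B * P) *ᵥ w = 0 := fun w => by
      rw [← mulVec_mulVec]
      exact (hPker _).mpr (by rw [mulVec_mulVec, hP2])
    ext i j
    have := congrFun (h (Pi.single j 1)) i
    simpa [mulVec_single] using this
  have hPB : P * B = 0 := by
    have h : (B * P)ᴴ = P * B := by rw [conjTranspose_mul, hP.eq, hB.1.eq]
    rw [← h, hBP, conjTranspose_zero]
  have hMherm : ∀ ε : ℝ, (B - (ε : ℂ) • P).IsHermitian := fun ε => by
    show (B - (ε : ℂ) • P)ᴴ = _
    rw [conjTranspose_sub, conjTranspose_smul, hB.1.eq, hP.eq, Complex.star_def,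
      Complex.conj_ofReal]
  -- the minimum positive eigenvalue over small principal submatrices of B
  let cfun : Finset (Fin (k + nm)) → ℝ := fun T =>
    if h : T.Nonempty then
      letI := h.coe_sort
      Finset.univ.inf' Finset.univ_nonempty
        ((hB.1.submatrix (fun i : T => (i : Fin (k + nm)))).eigenvalues)
    else 1
  have hcpos : ∀ T : Finset (Fin (k + nm)), T.Nonempty → T.card ≤ k → 0 < cfun T := by
    intro T hT hTk
    haveI := hT.coe_sort
    have hpsd : (B.submatrix (fun i : T => (i : Fin (k + nm)))
        (fun i : T => (i : Fin (k + nm)))).PosSemidef := hB.submatrix _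
    have heig : ∀ i, 0 < (hB.1.submatrix (fun i : T => (i : Fin (k + nm)))).eigenvalues i := by
      have hdet : (B.submatrix (fun i : T => (i : Fin (k + nm)))
          (fun i : T => (i : Fin (k + nm)))).det ≠ 0 := (hminors T hT hTk).ne'
      rw [Matrix.IsHermitian.det_eq_prod_eigenvalues
        (hB.1.submatrix (fun i : T => (i : Fin (k + nm))))] at hdet
      intro i
      rcases lt_or_eq_of_le (hpsd.eigenvalues_nonneg i) with h | h
      · exact h
      · exfalso
        apply hdet
        apply Finset.prod_eq_zero (Finset.mem_univ i)
        rw [← h]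
        norm_num
    simp only [cfun, dif_pos hT]
    rw [Finset.lt_inf'_iff]
    exact fun i _ => heig i
  -- the threshold
  let 𝒯 : Finset (Finset (Fin (k + nm))) :=
    Finset.univ.filter fun T => T.Nonempty ∧ T.card ≤ k
  set E0 : ℝ := (insert (1 : ℝ) (𝒯.image cfun)).min' (Finset.insert_nonempty _ _) with hE0
  have hE0pos : 0 < E0 := by
    have hmem := Finset.min'_mem (insert (1 : ℝ) (𝒯.image cfun)) (Finset.insert_nonempty _ _)
    rw [← hE0, Finset.mem_insert] at hmem
    rcases hmem with h | h
    · rw [h]; norm_num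
    · obtain ⟨T, hT, hTe⟩ := Finset.mem_image.mp h
      rw [Finset.mem_filter] at hT
      rw [← hTe]
      exact hcpos T hT.2.1 hT.2.2
  have hE0le : ∀ T : Finset (Fin (k + nm)), T.Nonempty → T.card ≤ k → E0 ≤ cfun T := by
    intro T h1 h2
    exact Finset.min'_le _ _ (Finset.mem_insert_of_mem
      (Finset.mem_image_of_mem cfun (by simp [𝒯, Finset.mem_filter, h1, h2])))
  -- key positive-definiteness of small principal submatrices of B - εP
  have keyPD : ∀ ε : ℝ, 0 < ε → ε < E0 → ∀ T : Finset (Fin (k + nm)), T.card ≤ k →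
      ∀ x : ↥T → ℂ, x ≠ 0 →
      0 < star x ⬝ᵥ ((B - (ε : ℂ) • P).submatrix (fun i : T => (i : Fin (k + nm)))
        (fun i : T => (i : Fin (k + nm)))) *ᵥ x := by
    intro ε hε hεE T hTk x hx
    obtain ⟨i0, hi0⟩ := Function.ne_iff.mp hx
    have hi0' : x i0 ≠ 0 := by simpa using hi0
    have hTne : T.Nonempty := ⟨i0.1, i0.2⟩
    haveI := hTne.coe_sort
    set cT : ↥T → Fin (k + nm) := fun i => (i : Fin (k + nm)) with hcT
    have hcTinj : Function.Injective cT := Subtype.val_injective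
    set MT := (B - (ε : ℂ) • P).submatrix cT cT with hMT
    have hMTherm : MT.IsHermitian := (hMherm ε).submatrix cT
    have hsplit : star x ⬝ᵥ MT *ᵥ x
        = star x ⬝ᵥ (B.submatrix cT cT) *ᵥ x
          - (ε : ℂ) * (star x ⬝ᵥ (P.submatrix cT cT) *ᵥ x) := by
      have : MT = B.submatrix cT cT - (ε : ℂ) • P.submatrix cT cT := rfl
      rw [this, sub_mulVec, smul_mulVec, dotProduct_sub, dotProduct_smul, smul_eq_mul]
    -- lower bound for the B part
    have hBlow : cfun T * (∑ i, Complex.normSq (x i))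
        ≤ (star x ⬝ᵥ (B.submatrix cT cT) *ᵥ x).re := by
      have := form_ge_inf (hB.1.submatrix cT) x
      simpa only [cfun, dif_pos hTne] using this
    -- upper bound for the P part
    have hPup : (star x ⬝ᵥ (P.submatrix cT cT) *ᵥ x).re ≤ ∑ i, Complex.normSq (x i) := by
      have hq := extMap_quadratic cT hcTinj P x
      rw [← hq]
      have := proj_form_le hP.eq hP2 (extMap cT x)
      rwa [extMap_sum_normSq cT hcTinj] at this
    have hsum : 0 < ∑ i, Complex.normSq (x i) := sum_normSq_pos hx
    have hre : 0 < (star x ⬝ᵥ MT *ᵥ x).re := by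
      rw [hsplit, Complex.sub_re, Complex.re_ofReal_mul]
      have hεc : ε < cfun T := lt_of_lt_of_le hεE (hE0le T hTne hTk)
      nlinarith
    have heq := herm_form hMTherm x
    rw [heq] at hre ⊢
    rw [Complex.ofReal_re] at hre
    exact Complex.zero_lt_real.mpr hre
  -- dimension of the kernel of B
  have hkerB : Module.finrank ℂ (LinearMap.ker B.mulVecLin) = nm := by
    have h := LinearMap.finrank_range_add_finrank_ker B.mulVecLin
    rw [Module.finrank_fintype_fun_eq_card, Fintype.card_fin] at h
    have hr : Module.finrank ℂ (LinearMap.range B.mulVecLin) = k := hrank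
    omega
  refine ⟨E0, hE0pos, fun ε hε hεE => ?_⟩
  have hMh := hMherm ε
  set M := B - (ε : ℂ) • P with hM
  -- Part 1: kPMP
  have part1 : kPMP k M := by
    intro S hS
    rcases S.eq_empty_or_nonempty with h | h
    · haveI : IsEmpty ↥S := Finset.isEmpty_coe_sort.mpr h
      rw [Matrix.det_isEmpty]
      exact zero_le_one
    · have hpd : (M.submatrix (fun i : S => (i : Fin (k + nm)))
          (fun i : S => (i : Fin (k + nm)))).PosDef :=
        .of_dotProduct_mulVec_pos (hMh.submatrix _) fun x hx => keyPD ε hε hεE S hS x hx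
      exact hpd.det_pos.le
  -- Part 2: signature
  have hposcount : k ≤ (Finset.univ.filter fun i => 0 < hMh.eigenvalues i).card := by
    have := count_le hMh 1 (fun i => 0 < hMh.eigenvalues i)
      (fun i hi => by rw [one_mul]; exact not_lt.mp hi)
      (LinearMap.range B.mulVecLin) ?_
    · have hr : Module.finrank ℂ (LinearMap.range B.mulVecLin) = k := hrank
      omega
    · rintro v ⟨w, rfl⟩ hv0
      rw [one_mul]
      have hveq : B.mulVecLin w = B *ᵥ w := rfl
      rw [hveq] at hv0 ⊢
      have hPv : P *ᵥ (B *ᵥ w) = 0 := by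
        rw [mulVec_mulVec, hPB, zero_mulVec]
      have hform : star (B *ᵥ w) ⬝ᵥ M *ᵥ (B *ᵥ w) = star (B *ᵥ w) ⬝ᵥ B *ᵥ (B *ᵥ w) := by
        rw [hM, sub_mulVec, smul_mulVec, hPv, smul_zero, sub_zero]
      rw [hform]
      have h0 := hB.dotProduct_mulVec_nonneg (B *ᵥ w)
      have hne : star (B *ᵥ w) ⬝ᵥ B *ᵥ (B *ᵥ w) ≠ 0 := by
        intro hz
        have hBv : B *ᵥ (B *ᵥ w) = 0 := (hB.dotProduct_mulVec_zero_iff _).mp hz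
        have : P *ᵥ (B *ᵥ w) = B *ᵥ w := (hPker _).mp hBv
        rw [hPv] at this
        exact hv0 this.symm
      have hlt : 0 < star (B *ᵥ w) ⬝ᵥ B *ᵥ (B *ᵥ w) := lt_of_le_of_ne h0 (Ne.symm hne)
      exact (Complex.pos_iff.mp hlt).1
  have hnegcount : nm ≤ (Finset.univ.filter fun i => hMh.eigenvalues i < 0).card := by
    have := count_le hMh (-1) (fun i => hMh.eigenvalues i < 0)
      (fun i hi => by nlinarith [not_lt.mp hi])
      (LinearMap.ker B.mulVecLin) ?_
    · omega
    · intro v hv hv0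
      have hBv : B *ᵥ v = 0 := hv
      have hPv : P *ᵥ v = v := (hPker _).mp hBv
      have hform : star v ⬝ᵥ M *ᵥ v = ((-(ε * ∑ i, Complex.normSq (v i)) : ℝ) : ℂ) := by
        rw [hM, sub_mulVec, smul_mulVec, hBv, hPv, zero_sub, dotProduct_neg,
          dotProduct_smul, smul_eq_mul, star_dotProduct_self']
        push_cast
        ring
      rw [hform, Complex.ofReal_re]
      have := sum_normSq_pos hv0
      nlinarith
  have hparts : (Finset.univ.filter fun i => 0 < hMh.eigenvalues i).card
      + ((Finset.univ.filter fun i => hMh.eigenvalues i < 0).card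
        + (Finset.univ.filter fun i => hMh.eigenvalues i = 0).card) = k + nm := by
    have hd1 : Disjoint (Finset.univ.filter fun i => hMh.eigenvalues i < 0)
        (Finset.univ.filter fun i => hMh.eigenvalues i = 0) := by
      rw [Finset.disjoint_left]
      intro a ha hb
      rw [Finset.mem_filter] at ha hb
      rw [hb.2] at ha
      exact lt_irrefl 0 ha.2
    have hd2 : Disjoint (Finset.univ.filter fun i => 0 < hMh.eigenvalues i)
        ((Finset.univ.filter fun i => hMh.eigenvalues i < 0)
          ∪ (Finset.univ.filter fun i => hMh.eigenvalues i = 0)) := by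
      rw [Finset.disjoint_left]
      intro a ha hb
      rw [Finset.mem_filter] at ha
      rw [Finset.mem_union, Finset.mem_filter, Finset.mem_filter] at hb
      rcases hb with h | h
      · exact absurd ha.2 (not_lt.mpr h.2.le)
      · rw [h.2] at ha; exact lt_irrefl 0 ha.2
    have htri : (Finset.univ.filter fun i => 0 < hMh.eigenvalues i)
        ∪ ((Finset.univ.filter fun i => hMh.eigenvalues i < 0)
          ∪ (Finset.univ.filter fun i => hMh.eigenvalues i = 0)) = Finset.univ := by
      ext a
      simp only [Finset.mem_union, Finset.mem_filter, Finset.mem_univ, true_and, iff_true]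
      rcases lt_trichotomy (hMh.eigenvalues a) 0 with h | h | h
      · exact Or.inr (Or.inl h)
      · exact Or.inr (Or.inr h)
      · exact Or.inl h
    rw [← Finset.card_union_of_disjoint hd1, ← Finset.card_union_of_disjoint hd2, htri,
      Finset.card_univ, Fintype.card_fin]
  -- Part 3: (k+1)-minors are negative
  have part3 : ∀ S : Finset (Fin (k + nm)), S.card = k + 1 →
      (M.submatrix (fun i : S => (i : Fin (k + nm)))
        (fun i : S => (i : Fin (k + nm)))).det < 0 := by
    intro S hScard
    set cS : ↥S → Fin (k + nm) := fun i => (i : Fin (k + nm)) with hcS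
    have hcSinj : Function.Injective cS := Subtype.val_injective
    set MS := M.submatrix cS cS with hMS
    have hMSh : MS.IsHermitian := hMh.submatrix cS
    have hcardS : Fintype.card ↥S = k + 1 := by
      rw [Fintype.card_coe, hScard]
    -- positive eigenvalue count of MS
    obtain ⟨S', hsub, hS'card⟩ := Finset.exists_subset_card_eq (show k ≤ S.card by omega)
    let ι : ↥S' → ↥S := fun i => ⟨i.1, hsub i.2⟩
    have hι : Function.Injective ι := fun a b h =>
      Subtype.ext (by simpa [ι] using congrArg Subtype.val h)
    have hposS : k ≤ (Finset.univ.filter fun i => 0 < hMSh.eigenvalues i).card := by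
      have := count_le hMSh 1 (fun i => 0 < hMSh.eigenvalues i)
        (fun i hi => by rw [one_mul]; exact not_lt.mp hi)
        (LinearMap.range (extMap ι)) ?_
      · rwa [finrank_range_extMap ι hι, Fintype.card_coe, hS'card] at this
      · rintro v ⟨y, rfl⟩ hv0
        rw [one_mul]
        have hy0 : y ≠ 0 := by
          rintro rfl
          simp at hv0
        have hq := extMap_quadratic ι hι MS y
        have hsub2 : MS.submatrix ι ι = M.submatrix (fun i : S' => (i : Fin (k + nm)))
            (fun i : S' => (i : Fin (k + nm))) := rfl
        rw [hsub2] at hq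
        have hpos := keyPD ε hε hεE S' (le_of_eq hS'card) y hy0
        rw [← hq] at hpos
        exact (Complex.pos_iff.mp hpos).1
    -- negative eigenvalue count of MS
    have hnegS : 1 ≤ (Finset.univ.filter fun i => hMSh.eigenvalues i < 0).card := by
      set ES := extMap (Subtype.val : ↥S → Fin (k + nm)) with hES
      have hESinj : Function.Injective ES := extMap_injective _ Subtype.val_injective
      set W : Submodule ℂ (↥S → ℂ) :=
        Submodule.comap ES (LinearMap.ker B.mulVecLin) with hW
      have hWrank : 1 ≤ Module.finrank ℂ W := by
        have hmap : Submodule.map ES W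
            = LinearMap.range ES ⊓ LinearMap.ker B.mulVecLin := Submodule.map_comap_eq _ _
        have heq : Module.finrank ℂ W = Module.finrank ℂ (Submodule.map ES W) :=
          (Submodule.equivMapOfInjective ES hESinj W).finrank_eq
        have hsupinf := Submodule.finrank_sup_add_finrank_inf_eq
          (LinearMap.range ES) (LinearMap.ker B.mulVecLin)
        have hrange : Module.finrank ℂ (LinearMap.range ES) = k + 1 := by
          rw [hES, finrank_range_extMap _ Subtype.val_injective, hcardS]
        have hsup : Module.finrank ℂ (LinearMap.range ES ⊔ LinearMap.ker B.mulVecLin :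
            Submodule ℂ (Fin (k + nm) → ℂ)) ≤ k + nm := by
          have := (LinearMap.range ES ⊔ LinearMap.ker B.mulVecLin :
            Submodule ℂ (Fin (k + nm) → ℂ)).finrank_le
          rwa [Module.finrank_fintype_fun_eq_card, Fintype.card_fin] at this
        rw [heq, hmap]
        omega
      have := count_le hMSh (-1) (fun i => hMSh.eigenvalues i < 0)
        (fun i hi => by nlinarith [not_lt.mp hi])
        W ?_
      · omega
      · intro v hv hv0
        have hBv : B *ᵥ (ES v) = 0 := hv
        have hPv : P *ᵥ (ES v) = ES v := (hPker _).mp hBv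
        have hEv0 : ES v ≠ 0 := fun h => hv0 (hESinj (by rw [h, map_zero]))
        have hq := (extMap_quadratic (Subtype.val : ↥S → Fin (k + nm))
          Subtype.val_injective M v).symm
        have hsub2 : M.submatrix (Subtype.val : ↥S → Fin (k + nm)) Subtype.val = MS := rfl
        rw [hsub2] at hq
        have hform : star v ⬝ᵥ MS *ᵥ v
            = ((-(ε * ∑ i, Complex.normSq (ES v i)) : ℝ) : ℂ) := by
          rw [hq, hM, sub_mulVec, smul_mulVec, hBv, hPv, zero_sub, dotProduct_neg,
            dotProduct_smul, smul_eq_mul, star_dotProduct_self']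
          push_cast
          ring
        rw [hform, Complex.ofReal_re]
        have := sum_normSq_pos hEv0
        nlinarith
    -- exact counts for MS
    have hpartsS : (Finset.univ.filter fun i => 0 < hMSh.eigenvalues i).card
        + ((Finset.univ.filter fun i => hMSh.eigenvalues i < 0).card
          + (Finset.univ.filter fun i => hMSh.eigenvalues i = 0).card) = k + 1 := by
      have hd1 : Disjoint (Finset.univ.filter fun i => hMSh.eigenvalues i < 0)
          (Finset.univ.filter fun i => hMSh.eigenvalues i = 0) := by
        rw [Finset.disjoint_left]
        intro a ha hb
        rw [Finset.mem_filter] at ha hb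
        rw [hb.2] at ha
        exact lt_irrefl 0 ha.2
      have hd2 : Disjoint (Finset.univ.filter fun i => 0 < hMSh.eigenvalues i)
          ((Finset.univ.filter fun i => hMSh.eigenvalues i < 0)
            ∪ (Finset.univ.filter fun i => hMSh.eigenvalues i = 0)) := by
        rw [Finset.disjoint_left]
        intro a ha hb
        rw [Finset.mem_filter] at ha
        rw [Finset.mem_union, Finset.mem_filter, Finset.mem_filter] at hb
        rcases hb with h | h
        · exact absurd ha.2 (not_lt.mpr h.2.le)
        · rw [h.2] at ha; exact lt_irrefl 0 ha.2
      have htri : (Finset.univ.filter fun i => 0 < hMSh.eigenvalues i)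
          ∪ ((Finset.univ.filter fun i => hMSh.eigenvalues i < 0)
            ∪ (Finset.univ.filter fun i => hMSh.eigenvalues i = 0)) = Finset.univ := by
        ext a
        simp only [Finset.mem_union, Finset.mem_filter, Finset.mem_univ, true_and, iff_true]
        rcases lt_trichotomy (hMSh.eigenvalues a) 0 with h | h | h
        · exact Or.inr (Or.inl h)
        · exact Or.inr (Or.inr h)
        · exact Or.inl h
      rw [← Finset.card_union_of_disjoint hd1, ← Finset.card_union_of_disjoint hd2, htri,
        Finset.card_univ, hcardS]
    have hposE : (Finset.univ.filter fun i => 0 < hMSh.eigenvalues i).card = k := by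
      -- pos count ≤ k+1 - neg count ≤ k; combined with ≥ k
      omega
    have hnegE : (Finset.univ.filter fun i => hMSh.eigenvalues i < 0).card = 1 := by omega
    have hzeroE : (Finset.univ.filter fun i => hMSh.eigenvalues i = 0).card = 0 := by omega
    -- compute the determinant
    have hdet : MS.det = ((∏ i, hMSh.eigenvalues i : ℝ) : ℂ) := by
      rw [hMSh.det_eq_prod_eigenvalues]
      push_cast
      rfl
    have hzeroempty : (Finset.univ.filter fun i => hMSh.eigenvalues i = 0) = ∅ :=
      Finset.card_eq_zero.mp hzeroE
    have huniv : (Finset.univ.filter fun i => 0 < hMSh.eigenvalues i)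
        ∪ (Finset.univ.filter fun i => hMSh.eigenvalues i < 0) = Finset.univ := by
      ext a
      simp only [Finset.mem_union, Finset.mem_filter, Finset.mem_univ, true_and, iff_true]
      rcases lt_trichotomy (hMSh.eigenvalues a) 0 with h | h | h
      · exact Or.inr h
      · exfalso
        have : a ∈ (Finset.univ.filter fun i => hMSh.eigenvalues i = 0) :=
          Finset.mem_filter.mpr ⟨Finset.mem_univ a, h⟩
        rw [hzeroempty] at this
        exact absurd this (Finset.notMem_empty a)
      · exact Or.inl h
    have hdisj : Disjoint (Finset.univ.filter fun i => 0 < hMSh.eigenvalues i)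
        (Finset.univ.filter fun i => hMSh.eigenvalues i < 0) := by
      rw [Finset.disjoint_left]
      intro a ha hb
      rw [Finset.mem_filter] at ha hb
      exact absurd ha.2 (not_lt.mpr hb.2.le)
    obtain ⟨a, ha⟩ := Finset.card_eq_one.mp hnegE
    have haneg : hMSh.eigenvalues a < 0 := by
      have : a ∈ (Finset.univ.filter fun i => hMSh.eigenvalues i < 0) := by
        rw [ha]; exact Finset.mem_singleton_self a
      exact (Finset.mem_filter.mp this).2
    have hprodpos : 0 < ∏ i ∈ (Finset.univ.filter fun i => 0 < hMSh.eigenvalues i),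
        hMSh.eigenvalues i :=
      Finset.prod_pos fun i hi => (Finset.mem_filter.mp hi).2
    have hprodneg : (∏ i, hMSh.eigenvalues i) < 0 := by
      rw [← huniv, Finset.prod_union hdisj, ha, Finset.prod_singleton]
      exact mul_neg_of_pos_of_neg hprodpos haneg
    rw [hdet]
    have := (Complex.real_lt_real (x := ∏ i, hMSh.eigenvalues i) (y := 0)).mpr hprodneg
    rwa [Complex.ofReal_zero] at this
  exact ⟨part1, ⟨hMh, by omega, by omega, by omega⟩, part3⟩
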